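/- For s, t ∈ ℝ define x(s,t) = (Re cos(s+it), Re sin(s+it)), y(s,t) = (Im cos(s+it), Im sin(s+it)), and f(s,t) = ¼(sinh(2t) − 2t), where cos and sin denote the complex cosine and sine. Then for all (s,t) ∈ ℝ²: (i) x(s,t) = cosh(t) · (cos s, sin s); (ii) y(s,t) = sinh(t) · (−sin s, cos s); (iii) ∂f/∂s(s,t) = ω(∂x/∂s(s,t), y(s,t)) and ∂f/∂t(s,t) = ω(∂x/∂t(s,t), y(s,t)). -/

import Mathlib

/-- The canonical symplectic form on `ℝ²`: `ω((a₁,a₂),(c₁,c₂)) = a₁c₂ − a₂c₁`. -/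
def omega2 (a c : ℝ × ℝ) : ℝ := a.1 * c.2 - a.2 * c.1

theorem stmt16
    (x y : ℝ × ℝ → ℝ × ℝ) (f : ℝ × ℝ → ℝ)
    (hx : ∀ s t : ℝ, x (s, t) =
      ((Complex.cos ((s : ℂ) + t * Complex.I)).re,
       (Complex.sin ((s : ℂ) + t * Complex.I)).re))
    (hy : ∀ s t : ℝ, y (s, t) =
      ((Complex.cos ((s : ℂ) + t * Complex.I)).im,
       (Complex.sin ((s : ℂ) + t * Complex.I)).im))
    (hf : ∀ s t : ℝ, f (s, t) = (Real.sinh (2 * t) - 2 * t) / 4) :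
    ∀ s t : ℝ,
      x (s, t) = Real.cosh t • (Real.cos s, Real.sin s) ∧
      y (s, t) = Real.sinh t • (-Real.sin s, Real.cos s) ∧
      fderiv ℝ f (s, t) (1, 0) = omega2 (fderiv ℝ x (s, t) (1, 0)) (y (s, t)) ∧
      fderiv ℝ f (s, t) (0, 1) = omega2 (fderiv ℝ x (s, t) (0, 1)) (y (s, t)) := by
  -- closed forms for x, y, f as functions
  have hre : ∀ s t : ℝ,
      (Complex.cos ((s : ℂ) + t * Complex.I)).re = Real.cos s * Real.cosh t ∧
      (Complex.cos ((s : ℂ) + t * Complex.I)).im = -(Real.sin s * Real.sinh t) ∧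
      (Complex.sin ((s : ℂ) + t * Complex.I)).re = Real.sin s * Real.cosh t ∧
      (Complex.sin ((s : ℂ) + t * Complex.I)).im = Real.cos s * Real.sinh t := by
    intro s t
    refine ⟨?_, ?_, ?_, ?_⟩ <;>
    simp [Complex.cos_add, Complex.sin_add, Complex.cos_mul_I, Complex.sin_mul_I,
      Complex.cos_ofReal_re, Complex.sin_ofReal_re, Complex.sinh_ofReal_re]
  have hxfun : x = fun p : ℝ × ℝ =>
      (Real.cos p.1 * Real.cosh p.2, Real.sin p.1 * Real.cosh p.2) := by
    funext p
    obtain ⟨h1, _, h3, _⟩ := hre p.1 p.2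
    rw [show p = (p.1, p.2) from rfl, hx p.1 p.2, h1, h3]
  have hyfun : ∀ s t : ℝ, y (s, t) =
      (-(Real.sin s * Real.sinh t), Real.cos s * Real.sinh t) := by
    intro s t
    obtain ⟨_, h2, _, h4⟩ := hre s t
    rw [hy s t, h2, h4]
  have hffun : f = fun p : ℝ × ℝ => (Real.sinh (2 * p.2) - 2 * p.2) / 4 := by
    funext p
    rw [show p = (p.1, p.2) from rfl, hf p.1 p.2]
  intro s t
  -- derivative of f
  have hder1 : HasDerivAt (fun u : ℝ => (Real.sinh (2 * u) - 2 * u) / 4)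
      ((2 * Real.cosh (2 * t) - 2) / 4) t := by
    have h2u : HasDerivAt (fun u : ℝ => 2 * u) 2 t := by
      simpa using (hasDerivAt_id t).const_mul (2 : ℝ)
    have hs : HasDerivAt (fun u : ℝ => Real.sinh (2 * u)) (Real.cosh (2 * t) * 2) t :=
      (Real.hasDerivAt_sinh (2 * t)).comp t h2u
    have := (hs.sub h2u).div_const 4
    exact this.congr_deriv (by ring)
  have hFf : HasFDerivAt f
      (((2 * Real.cosh (2 * t) - 2) / 4) • ContinuousLinearMap.snd ℝ ℝ ℝ) (s, t) := by
    rw [hffun]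
    exact hder1.comp_hasFDerivAt (f := Prod.snd) (s, t) (hasFDerivAt_snd)
  -- derivative of x
  have hc1 : HasFDerivAt (fun p : ℝ × ℝ => Real.cos p.1)
      ((-Real.sin s) • ContinuousLinearMap.fst ℝ ℝ ℝ) (s, t) :=
    (Real.hasDerivAt_cos s).comp_hasFDerivAt (f := Prod.fst) (s, t) hasFDerivAt_fst
  have hs1 : HasFDerivAt (fun p : ℝ × ℝ => Real.sin p.1)
      ((Real.cos s) • ContinuousLinearMap.fst ℝ ℝ ℝ) (s, t) :=
    (Real.hasDerivAt_sin s).comp_hasFDerivAt (f := Prod.fst) (s, t) hasFDerivAt_fst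
  have hch : HasFDerivAt (fun p : ℝ × ℝ => Real.cosh p.2)
      ((Real.sinh t) • ContinuousLinearMap.snd ℝ ℝ ℝ) (s, t) :=
    (Real.hasDerivAt_cosh t).comp_hasFDerivAt (f := Prod.snd) (s, t) hasFDerivAt_snd
  have hFx := HasFDerivAt.prodMk (hc1.mul hch) (hs1.mul hch)
  simp only [Pi.mul_apply] at hFx
  rw [← hxfun] at hFx
  refine ⟨?_, ?_, ?_, ?_⟩
  · rw [hxfun]
    simp only [Prod.smul_mk, smul_eq_mul]
    exact Prod.ext (mul_comm _ _) (mul_comm _ _)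
  · rw [hyfun s t]
    simp only [Prod.smul_mk, smul_eq_mul]
    exact Prod.ext (by ring) (by ring)
  · rw [hFf.fderiv, hFx.fderiv, hyfun s t, omega2]
    simp
    ring
  · rw [hFf.fderiv, hFx.fderiv, hyfun s t, omega2]
    simp
    have h1 : Real.cosh (2 * t) = Real.cosh t ^ 2 + Real.sinh t ^ 2 := Real.cosh_two_mul t
    have h2 : Real.cosh t ^ 2 = Real.sinh t ^ 2 + 1 := Real.cosh_sq t
    have h3 : Real.cos s ^ 2 + Real.sin s ^ 2 = 1 := Real.cos_sq_add_sin_sq s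
    nlinarith [h1, h2, h3]
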